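/- Let β ∈ (0, 1/2) with β ≠ 1/3, set c = cos(2πβ), and let n ∈ ℕ. For ω ∈ Ĩⁿ(β) with ω ≠ ωₙ* define u₀(ω) = 1 + r_β(ω)·√(2 + 2c) and v₀(ω) = 3·cos(ωL); then (u₀(ω), v₀(ω)) ≠ (0, 0), and the limit, as ω → ωₙ* with ω ∈ Ĩⁿ(β) and ω ≠ ωₙ*, of u₀(ω)²/(u₀(ω)² + v₀(ω)²) equals 0 if β ∈ (0, 1/3), and equals 1 if β ∈ (1/3, 1/2). (This is the continuous extension at ωₙ* of the normalized decaying eigenvector of the transfer matrix: it tends to (0, 1) for β < 1/3 and to (1, 0) for β > 1/3.) -/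

import Mathlib

open Real Filter Topology

/-- The edge length `L = 1/√3`. -/
noncomputable def L : ℝ := 1 / Real.sqrt 3

/-- The Dirac frequency `ωₙ* = (2n+1)π/(2L)`. -/
noncomputable def ωstar (n : ℕ) : ℝ := (2 * n + 1) * π / (2 * L)

/-- `g_β(ω) = (9·cos²(ωL) − 3 − 2·cos(2πβ)) / √(2 + 2·cos(2πβ))`. -/
noncomputable def g (β ω : ℝ) : ℝ :=
  (9 * Real.cos (ω * L) ^ 2 - 3 - 2 * Real.cos (2 * π * β)) /
    Real.sqrt (2 + 2 * Real.cos (2 * π * β))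

/-- `a(β) = arccos(√(3 + 2·cos(2πβ) − 2·√(2 + 2·cos(2πβ)))/3)`. -/
noncomputable def aβ (β : ℝ) : ℝ :=
  Real.arccos (Real.sqrt (3 + 2 * Real.cos (2 * π * β) -
    2 * Real.sqrt (2 + 2 * Real.cos (2 * π * β))) / 3)

/-- The open interval `Ĩⁿ(β) = (nπ/L + a(β)/L, (n+1)π/L − a(β)/L)`. -/
noncomputable def Itilde (β : ℝ) (n : ℕ) : Set ℝ :=
  Set.Ioo (n * π / L + aβ β / L) ((n + 1) * π / L - aβ β / L)

/-- `r_β(ω) = (g_β(ω) + √(g_β(ω)² − 4))/2`. -/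
noncomputable def r (β ω : ℝ) : ℝ := (g β ω + Real.sqrt (g β ω ^ 2 - 4)) / 2

/-- First component `u₀(ω) = 1 + r_β(ω)·√(2 + 2·cos(2πβ))` of the transfer-matrix
eigenvector. -/
noncomputable def u₀ (β ω : ℝ) : ℝ :=
  1 + r β ω * Real.sqrt (2 + 2 * Real.cos (2 * π * β))

/-- Second component `v₀(ω) = 3·cos(ωL)` of the transfer-matrix eigenvector. -/
noncomputable def v₀ (ω : ℝ) : ℝ := 3 * Real.cos (ω * L)

lemma hLpos : 0 < L := by
  unfold L
  positivity

lemma ωstar_mul_L (n : ℕ) : ωstar n * L = (2 * n + 1) * π / 2 := by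
  unfold ωstar
  have hL := hLpos.ne'
  field_simp

lemma cos_ωstar (n : ℕ) : Real.cos (ωstar n * L) = 0 := by
  rw [ωstar_mul_L]
  exact Real.cos_eq_zero_iff.2 ⟨n, by push_cast; ring⟩

lemma u0_eq (β ω : ℝ) (hq : 0 < 2 + 2 * Real.cos (2 * π * β)) :
    u₀ β ω = ((9 * Real.cos (ω * L) ^ 2 + 1 - (2 + 2 * Real.cos (2 * π * β))) +
      Real.sqrt ((9 * Real.cos (ω * L) ^ 2 + 1 - (2 + 2 * Real.cos (2 * π * β))) ^ 2
        - 36 * Real.cos (ω * L) ^ 2)) / 2 := by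
  set c := Real.cos (2 * π * β) with hc
  set t := Real.cos (ω * L) with ht
  have hs : 0 < Real.sqrt (2 + 2 * c) := Real.sqrt_pos.2 hq
  set s := Real.sqrt (2 + 2 * c) with hsdef
  have hs2 : s ^ 2 = 2 + 2 * c := Real.sq_sqrt hq.le
  have hNs : (9 * t ^ 2 - 3 - 2 * c) / s * s = 9 * t ^ 2 - 3 - 2 * c :=
    div_mul_cancel₀ _ hs.ne'
  have key : s * Real.sqrt (((9 * t ^ 2 - 3 - 2 * c) / s) ^ 2 - 4) =
      Real.sqrt ((9 * t ^ 2 + 1 - (2 + 2 * c)) ^ 2 - 36 * t ^ 2) := by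
    have hmul : ∀ x : ℝ, Real.sqrt (s ^ 2 * x) = s * Real.sqrt x := fun x => by
      rw [Real.sqrt_mul (sq_nonneg s), Real.sqrt_sq hs.le]
    rw [← hmul]
    congr 1
    have : s ^ 2 * (((9 * t ^ 2 - 3 - 2 * c) / s) ^ 2 - 4) =
        ((9 * t ^ 2 - 3 - 2 * c) / s * s) ^ 2 - 4 * s ^ 2 := by ring
    rw [this, hNs, hs2]
    ring
  simp only [u₀, r, g, ← hc, ← ht, ← hsdef]
  calc 1 + ((9 * t ^ 2 - 3 - 2 * c) / s +
        Real.sqrt (((9 * t ^ 2 - 3 - 2 * c) / s) ^ 2 - 4)) / 2 * s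
      = 1 + ((9 * t ^ 2 - 3 - 2 * c) / s * s +
        s * Real.sqrt (((9 * t ^ 2 - 3 - 2 * c) / s) ^ 2 - 4)) / 2 := by ring
    _ = 1 + ((9 * t ^ 2 - 3 - 2 * c) +
        Real.sqrt ((9 * t ^ 2 + 1 - (2 + 2 * c)) ^ 2 - 36 * t ^ 2)) / 2 := by
        rw [hNs, key]
    _ = _ := by ring

lemma cos_ne_zero_on (β : ℝ) (n : ℕ) (ω : ℝ) (hω : ω ∈ Itilde β n \ {ωstar n}) :
    Real.cos (ω * L) ≠ 0 := by
  obtain ⟨⟨h1, h2⟩, hne⟩ := hω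
  have ha : 0 ≤ aβ β := Real.arccos_nonneg _
  have hL := hLpos
  have hπ := Real.pi_pos
  intro h0
  rw [Real.cos_eq_zero_iff] at h0
  obtain ⟨k, hk⟩ := h0
  have haL : 0 ≤ aβ β / L := div_nonneg ha hL.le
  have hA : (n : ℝ) * π < ω * L := by
    have : (n : ℝ) * π / L < ω := by linarith
    exact (div_lt_iff₀ hL).1 this
  have hB : ω * L < ((n : ℝ) + 1) * π := by
    have : ω < ((n : ℝ) + 1) * π / L := by linarith
    exact (lt_div_iff₀ hL).1 this
  rw [hk] at hA hB
  have h2n : 2 * (n : ℝ) < 2 * (k : ℝ) + 1 := by nlinarith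
  have h2n' : 2 * (k : ℝ) + 1 < 2 * (n : ℝ) + 2 := by nlinarith
  have hk1 : 2 * (n : ℤ) < 2 * k + 1 := by exact_mod_cast h2n
  have hk2 : 2 * k + 1 < 2 * (n : ℤ) + 2 := by exact_mod_cast h2n'
  have hkn : k = (n : ℤ) := by omega
  apply hne
  have hωL : ω * L = ωstar n * L := by
    rw [hk, hkn, ωstar_mul_L]; push_cast; ring
  exact mul_right_cancel₀ hL.ne' hωL

set_option maxHeartbeats 2000000 in
theorem stmt_15 (β : ℝ) (hβ0 : 0 < β) (hβ1 : β < 1 / 2) (hβ3 : β ≠ 1 / 3) (n : ℕ) :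
    (∀ ω ∈ Itilde β n \ {ωstar n}, (u₀ β ω, v₀ ω) ≠ (0, 0)) ∧
    (β < 1 / 3 →
      Tendsto (fun ω : ℝ => u₀ β ω ^ 2 / (u₀ β ω ^ 2 + v₀ ω ^ 2))
        (𝓝[Itilde β n \ {ωstar n}] (ωstar n)) (𝓝 0)) ∧
    (1 / 3 < β →
      Tendsto (fun ω : ℝ => u₀ β ω ^ 2 / (u₀ β ω ^ 2 + v₀ ω ^ 2))
        (𝓝[Itilde β n \ {ωstar n}] (ωstar n)) (𝓝 1)) := by
  have hπ := Real.pi_pos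
  set c := Real.cos (2 * π * β) with hc
  have h2πβ0 : 0 < 2 * π * β := by positivity
  have h2πβπ : 2 * π * β < π := by nlinarith
  have hcgt : -1 < c := by
    have := Real.strictAntiOn_cos ⟨by linarith, by linarith⟩
      ⟨Real.pi_pos.le, le_refl π⟩ h2πβπ
    simpa [Real.cos_pi] using this
  have hq : 0 < 2 + 2 * c := by linarith
  have hcos23 : Real.cos (2 * π / 3) = -(1 / 2) := by
    have : (2 : ℝ) * π / 3 = π - π / 3 := by ring
    rw [this, Real.cos_pi_sub, Real.cos_pi_div_three]
  -- the function t
  set T : ℝ → ℝ := fun ω => Real.cos (ω * L) with hT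
  have hTcont : Continuous T := Real.continuous_cos.comp (continuous_id.mul continuous_const)
  have hTstar : T (ωstar n) = 0 := cos_ωstar n
  constructor
  · intro ω hω
    intro h
    have h2 : v₀ ω = 0 := congrArg Prod.snd h
    have := cos_ne_zero_on β n ω hω
    apply this
    have : (3 : ℝ) * Real.cos (ω * L) = 0 := h2
    linarith
  constructor
  · -- β < 1/3 : q > 1
    intro hβlt
    have hclt : -(1/2) < c := by
      have h1 : 2 * π * β < 2 * π / 3 := by nlinarith
      have := Real.strictAntiOn_cos ⟨by positivity, by linarith [Real.pi_pos]⟩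
        ⟨by linarith, by linarith⟩ h1
      rw [hcos23] at this
      exact this
    set K : ℝ := 2 + 2 * c - 1 with hK
    have hKpos : 0 < K := by simp only [hK]; linarith
    set δ : ℝ := min (K / 18) (K ^ 2 / 144) with hδ
    have hδpos : 0 < δ := lt_min (by positivity) (by positivity)
    apply squeeze_zero' (g := fun ω => 144 * T ω ^ 2 / K ^ 2)
    · exact Eventually.of_forall fun ω => by positivity
    · have hmem : ∀ᶠ ω in 𝓝[Itilde β n \ {ωstar n}] (ωstar n),
          ω ∈ Itilde β n \ {ωstar n} := eventually_mem_nhdsWithin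
      have hTsq : Tendsto (fun ω => T ω ^ 2) (𝓝 (ωstar n)) (𝓝 0) := by
        have := ((hTcont.pow 2).tendsto (ωstar n))
        rw [Pi.pow_apply, hTstar, zero_pow (by norm_num)] at this
        exact this
      have hsmall : ∀ᶠ ω in 𝓝[Itilde β n \ {ωstar n}] (ωstar n), T ω ^ 2 < δ :=
        (hTsq.eventually_lt_const hδpos).filter_mono nhdsWithin_le_nhds
      filter_upwards [hmem, hsmall] with ω hωS hδω
      have ht0 : T ω ≠ 0 := cos_ne_zero_on β n ω hωS
      have ht1 : T ω ^ 2 < K / 18 := lt_of_lt_of_le hδω (min_le_left _ _)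
      have ht2 : T ω ^ 2 < K ^ 2 / 144 := lt_of_lt_of_le hδω (min_le_right _ _)
      have hu := u0_eq β ω hq
      rw [← hc] at hu
      have hv : v₀ ω = 3 * T ω := rfl
      obtain ⟨t, htt⟩ : ∃ t, T ω = t := ⟨_, rfl⟩
      obtain ⟨U, hU⟩ : ∃ U, u₀ β ω = U := ⟨_, rfl⟩
      obtain ⟨V, hV⟩ : ∃ V, v₀ ω = V := ⟨_, rfl⟩
      have htt' : Real.cos (ω * L) = t := htt
      rw [htt] at ht0 ht1 ht2
      rw [hU, htt'] at hu
      rw [hV, htt] at hv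
      rw [hU, hV, htt]
      obtain ⟨q, hqq⟩ : ∃ q, 2 + 2 * c = q := ⟨_, rfl⟩
      have hKq : K = q - 1 := by rw [hK, hqq]
      rw [hqq] at hu
      clear_value T c K δ
      clear hT hc hK hδ hq hδpos hmem hsmall hδω hωS hTcont hTstar hTsq hqq
        hcgt hclt hcos23 h2πβπ h2πβ0 hβ0 hβ1 hβ3 hβlt hU hV
      set Y : ℝ := 9 * t ^ 2 + 1 - q with hY
      clear_value Y
      have hYK : Y ≤ -(K / 2) := by rw [hY, hKq]; nlinarith [ht1]
      have hE : 0 ≤ Y ^ 2 - 36 * t ^ 2 := by nlinarith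
      have hsE : 0 ≤ Real.sqrt (Y ^ 2 - 36 * t ^ 2) := Real.sqrt_nonneg _
      have hsE2 : Real.sqrt (Y ^ 2 - 36 * t ^ 2) ^ 2 = Y ^ 2 - 36 * t ^ 2 :=
        Real.sq_sqrt hE
      obtain ⟨e, hee⟩ : ∃ e, Real.sqrt (Y ^ 2 - 36 * t ^ 2) = e := ⟨_, rfl⟩
      rw [hee] at hsE hsE2
      rw [hee] at hu
      have key : U * (e - Y) = -(18 * t ^ 2) := by
        rw [hu]
        linear_combination hsE2 / 2
      have heY : K / 2 ≤ e - Y := by linarith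
      have htpos : 0 < t ^ 2 := by positivity
      have hden : 0 < U ^ 2 + V ^ 2 := by rw [hv]; nlinarith [sq_nonneg U]
      rw [div_le_div_iff₀ hden (by positivity)]
      have hsq : U ^ 2 * (e - Y) ^ 2 = 324 * t ^ 4 := by nlinarith [key]
      rw [hv]
      nlinarith [sq_nonneg U, sq_nonneg t, hsq, heY, hKpos,
        mul_le_mul_of_nonneg_left (mul_self_le_mul_self (by linarith : (0:ℝ) ≤ K / 2)
          heY) (sq_nonneg U)]
    · have : Tendsto (fun ω => 144 * T ω ^ 2 / K ^ 2) (𝓝 (ωstar n))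
          (𝓝 (144 * T (ωstar n) ^ 2 / K ^ 2)) :=
        (((continuous_const.mul (hTcont.pow 2)).div_const _).tendsto _)
      rw [hTstar] at this
      simpa using this.mono_left nhdsWithin_le_nhds
  · -- 1/3 < β : q < 1
    intro hβgt
    have hclt : c < -(1/2) := by
      have h1 : 2 * π / 3 < 2 * π * β := by nlinarith
      have := Real.strictAntiOn_cos ⟨by positivity, by linarith⟩
        ⟨by linarith, by linarith⟩ h1
      rw [hcos23] at this
      exact this
    set K : ℝ := 1 - (2 + 2 * c) with hK
    have hKpos : 0 < K := by simp only [hK]; linarith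
    have hulb : ∀ ω, K / 2 ≤ u₀ β ω := by
      intro ω
      have hu := u0_eq β ω hq
      rw [← hc] at hu
      have hsE : 0 ≤ Real.sqrt ((9 * Real.cos (ω * L) ^ 2 + 1 - (2 + 2 * c)) ^ 2
          - 36 * Real.cos (ω * L) ^ 2) := Real.sqrt_nonneg _
      have : K ≤ 9 * Real.cos (ω * L) ^ 2 + 1 - (2 + 2 * c) := by
        simp only [hK]; nlinarith [sq_nonneg (Real.cos (ω * L))]
      rw [hu]; linarith
    apply tendsto_of_tendsto_of_tendsto_of_le_of_le'
      (g := fun ω => 1 - 36 * T ω ^ 2 / K ^ 2) (h := fun _ => (1 : ℝ))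
    · have : Tendsto (fun ω => 1 - 36 * T ω ^ 2 / K ^ 2) (𝓝 (ωstar n))
          (𝓝 (1 - 36 * T (ωstar n) ^ 2 / K ^ 2)) :=
        (tendsto_const_nhds.sub (((continuous_const.mul (hTcont.pow 2)).div_const _).tendsto _))
      rw [hTstar] at this
      simpa using this.mono_left nhdsWithin_le_nhds
    · exact tendsto_const_nhds
    · apply Eventually.of_forall
      intro ω
      have hu := hulb ω
      have hv : v₀ ω = 3 * T ω := rfl
      obtain ⟨t, htt⟩ : ∃ t, T ω = t := ⟨_, rfl⟩
      obtain ⟨U, hU⟩ : ∃ U, u₀ β ω = U := ⟨_, rfl⟩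
      obtain ⟨V, hV⟩ : ∃ V, v₀ ω = V := ⟨_, rfl⟩
      rw [hU] at hu
      rw [hV, htt] at hv
      rw [hU, hV, htt]
      clear_value T c K
      clear hT hc hK hq hulb hTcont hTstar hcgt hclt hcos23 h2πβπ h2πβ0
        hβ0 hβ1 hβ3 hβgt hU hV htt
      have hu2 : K ^ 2 / 4 ≤ U ^ 2 := by nlinarith
      have hden : 0 < U ^ 2 + V ^ 2 := by nlinarith [sq_nonneg V]
      rw [sub_le_iff_le_add]
      have e1 : U ^ 2 / (U ^ 2 + V ^ 2) = 1 - V ^ 2 / (U ^ 2 + V ^ 2) := by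
        field_simp
        ring
      rw [e1]
      have e2 : V ^ 2 / (U ^ 2 + V ^ 2) ≤ 36 * t ^ 2 / K ^ 2 := by
        rw [div_le_div_iff₀ hden (by positivity), hv]
        nlinarith [sq_nonneg t, hu2, sq_nonneg U, sq_nonneg (t * t),
          mul_le_mul_of_nonneg_left hu2 (sq_nonneg t)]
      linarith
    · apply Eventually.of_forall
      intro ω
      have hu := hulb ω
      obtain ⟨U, hU⟩ : ∃ U, u₀ β ω = U := ⟨_, rfl⟩
      obtain ⟨V, hV⟩ : ∃ V, v₀ ω = V := ⟨_, rfl⟩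
      rw [hU] at hu
      rw [hU, hV]
      clear_value c K
      clear hc hK hq hulb hcgt hclt hcos23 h2πβπ h2πβ0 hβ0 hβ1 hβ3 hβgt hU hV
      have hu2 : 0 < U ^ 2 := by nlinarith
      have hden : 0 < U ^ 2 + V ^ 2 := by nlinarith [sq_nonneg V]
      exact div_le_one_of_le₀ (by nlinarith [sq_nonneg V]) hden.le
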